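/- Let $X$ be countable and let $G:[0,1]^X\to[0,1]$ be given at a point $x$ by $G(z|x)=\sum_{f\in S_X}\mu_x(f)\prod_{y\in X} z(y)^{f(y)}$, where $\mu_x$ is a probability measure on the set $S_X$ of finitely supported functions $X\to\mathbb N$, and assume the means $m_{xy}:=\sum_f f(y)\mu_x(f)$ satisfy $\sum_y m_{xy}<\infty$. Suppose $z\in[0,1]^X$ satisfies $G(z|x)\le z(x)$ for all $x$, and set $v:=\mathbf 1 - z$. Then for every $x$, $\sum_{y\in X} m_{xy} v(y) \ge v(x)$. -/

import Mathlib

open scoped ENNReal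

private lemma one_sub_mul_le {a b : ℝ≥0∞} (ha : a ≤ 1) (hb : b ≤ 1) :
    1 - a * b ≤ (1 - a) + (1 - b) := by
  rw [tsub_le_iff_right]
  calc (1:ℝ≥0∞) = a + (1 - a) := (add_tsub_cancel_of_le ha).symm
    _ = a * 1 + (1 - a) := by rw [mul_one]
    _ = a * (b + (1 - b)) + (1 - a) := by rw [add_tsub_cancel_of_le hb]
    _ = a * b + (a * (1 - b) + (1 - a)) := by ring
    _ ≤ a * b + ((1 - b) + (1 - a)) := by
        gcongr; exact mul_le_of_le_one_left zero_le ha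
    _ = (1 - a) + (1 - b) + a * b := by ring

private lemma one_sub_pow_le {a : ℝ≥0∞} (ha : a ≤ 1) (n : ℕ) :
    1 - a ^ n ≤ n * (1 - a) := by
  induction n with
  | zero => simp
  | succ k ih =>
      calc 1 - a ^ (k + 1) = 1 - a ^ k * a := by rw [pow_succ]
        _ ≤ (1 - a ^ k) + (1 - a) := one_sub_mul_le (pow_le_one' ha k) ha
        _ ≤ k * (1 - a) + 1 * (1 - a) := by rw [one_mul]; gcongr
        _ = (↑(k + 1)) * (1 - a) := by push_cast; ring

private lemma one_sub_prod_le {ι : Type*} (s : Finset ι) (g : ι → ℝ≥0∞)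
    (hg : ∀ i ∈ s, g i ≤ 1) : 1 - ∏ i ∈ s, g i ≤ ∑ i ∈ s, (1 - g i) := by
  induction s using Finset.cons_induction with
  | empty => simp
  | cons a s hnotmem ih =>
      rw [Finset.prod_cons, Finset.sum_cons]
      calc 1 - g a * ∏ i ∈ s, g i ≤ (1 - g a) + (1 - ∏ i ∈ s, g i) :=
            one_sub_mul_le (hg a (Finset.mem_cons_self a s))
              (Finset.prod_le_one (fun _ _ => zero_le)
                (fun i hi => hg i (Finset.mem_cons_of_mem hi)))
        _ ≤ (1 - g a) + ∑ i ∈ s, (1 - g i) := by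
            gcongr; exact ih fun i hi => hg i (Finset.mem_cons_of_mem hi)

/-- If `z ∈ [0,1]^X` satisfies `G(z|x) ≤ z(x)` for all `x`, where
`G(z|x) = ∑_f μ_x(f) ∏_y z(y)^{f(y)}` is the generating function of a branching random
walk with offspring distributions `μ_x` (probability measures on finitely supported
functions `X → ℕ`) having first moments `m_{xy}` with finite row sums, then
`v := 1 - z` satisfies `Mv ≥ v`, i.e. `∑_y m_{xy} v(y) ≥ v(x)` for every `x`. -/
theorem generating_function_subsolution_gives_superharmonic {X : Type*} [Countable X]
    (μ : X → (X →₀ ℕ) → ℝ≥0∞)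
    (hprob : ∀ x, ∑' f : X →₀ ℕ, μ x f = 1)
    (m : X → X → ℝ≥0∞)
    (hm : ∀ x y, m x y = ∑' f : X →₀ ℕ, μ x f * (f y : ℝ≥0∞))
    (hrow : ∀ x, ∑' y, m x y ≠ ∞)
    (z : X → ℝ≥0∞) (hz : ∀ x, z x ≤ 1)
    (hsub : ∀ x, (∑' f : X →₀ ℕ, μ x f * ∏ y ∈ f.support, z y ^ f y) ≤ z x) :
    ∀ x, 1 - z x ≤ ∑' y, m x y * (1 - z y) := by
  intro x
  set G := ∑' f : X →₀ ℕ, μ x f * ∏ y ∈ f.support, z y ^ f y with hG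
  have hprod_le : ∀ f : X →₀ ℕ, (∏ y ∈ f.support, z y ^ f y) ≤ 1 := fun f =>
    Finset.prod_le_one (fun _ _ => zero_le) (fun y _ => pow_le_one' (hz y) _)
  -- key per-f bound
  have key : ∀ f : X →₀ ℕ,
      1 - ∏ y ∈ f.support, z y ^ f y ≤ ∑' y, (f y : ℝ≥0∞) * (1 - z y) := by
    intro f
    have h1 : 1 - ∏ y ∈ f.support, z y ^ f y ≤ ∑ y ∈ f.support, (1 - z y ^ f y) :=
      one_sub_prod_le _ _ (fun y _ => pow_le_one' (hz y) _)
    have h2 : ∑ y ∈ f.support, (1 - z y ^ f y) ≤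
        ∑ y ∈ f.support, (f y : ℝ≥0∞) * (1 - z y) :=
      Finset.sum_le_sum fun y _ => one_sub_pow_le (hz y) (f y)
    have h3 : ∑' y, (f y : ℝ≥0∞) * (1 - z y) =
        ∑ y ∈ f.support, (f y : ℝ≥0∞) * (1 - z y) := by
      apply tsum_eq_sum
      intro y hy
      simp [Finsupp.notMem_support_iff.mp hy]
    rw [h3]
    exact h1.trans h2
  calc 1 - z x ≤ 1 - G := tsub_le_tsub_left (hsub x) 1
    _ ≤ ∑' f : X →₀ ℕ, μ x f * (1 - ∏ y ∈ f.support, z y ^ f y) := by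
        rw [tsub_le_iff_right, hG, ← ENNReal.tsum_add]
        conv_lhs => rw [← hprob x]
        apply ENNReal.tsum_le_tsum
        intro f
        rw [← mul_add, tsub_add_cancel_of_le (hprod_le f), mul_one]
    _ ≤ ∑' f : X →₀ ℕ, μ x f * ∑' y, (f y : ℝ≥0∞) * (1 - z y) := by
        apply ENNReal.tsum_le_tsum
        intro f
        exact mul_le_mul_right (key f) _
    _ = ∑' f : X →₀ ℕ, ∑' y, μ x f * ((f y : ℝ≥0∞) * (1 - z y)) := by
        simp_rw [ENNReal.tsum_mul_left]
    _ = ∑' y, ∑' f : X →₀ ℕ, μ x f * ((f y : ℝ≥0∞) * (1 - z y)) := ENNReal.tsum_comm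
    _ = ∑' y, m x y * (1 - z y) := by
        apply tsum_congr
        intro y
        rw [hm x y, ← ENNReal.tsum_mul_right]
        apply tsum_congr
        intro f
        ring
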